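/- With A_n the weight matrix and Â_n the matrix obtained from A_n by zeroing all entries (γ, σ) for which the first block of γ strictly contains an element of S(σ) other than its last element (equivalently, in the word encoding, the initial run of *'s in the row word is longer than in the column word), one has for all real α and n ≥ 1: det(αA_{n+1} + (1−α)Â_{n+1}) = det(A_n)·det(−2A_n)·det(αA_n + Â_n), with det(αA₁ + (1−α)Â₁) = −2. -/

import Mathlib

open Finset

/-- The first sign (`true` = barred = `−`) appearing in a list of optional signs. -/
def firstSign (l : List (Option Bool)) : Bool :=
  (l.filterMap id).headI

/-- Whether the `some` entries of a list form a prefix (no `some` after a `none`). -/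
def somesArePrefix (l : List (Option Bool)) : Bool :=
  (l.dropWhile fun o => o.isSome).all fun o => o.isNone

/-- The weight `wt_γ(σ)` of a signed set `σ` (encoded as a word `l` over
`{0,1,*} = Option Bool`) with respect to a signed composition `γ`:
`wt_γ(σ) = 0` unless `S(σ)` is unimodal with respect to the underlying composition of
`γ` and the sign vector `ε̃` of `σ` is constant on each block of `γ`; otherwise
`wt_γ(σ) = (−1)^{|S(σ) \ S(γ)| + n_γ(σ)}`, where `n_γ(σ)` is the number of blocks on
which both `γ` and `σ` assign the negative sign. -/
def wt : List (ℕ × Bool) → List (Option Bool) → ℤ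
  | [], l => if l.isEmpty then 1 else 0
  | (a, b) :: t, l =>
      let blk := l.take a
      let inner := blk.take (a - 1)
      let sgn := firstSign l
      if somesArePrefix inner
          && ((List.range blk.length).all fun j => firstSign (l.drop j) == sgn) then
        (-1 : ℤ) ^ ((inner.filterMap id).length + (if b && sgn then 1 else 0))
          * wt t (l.drop a)
      else 0

/-- Decoding of a word over `{0,1,*}` (with last letter not `*`) into the signed
composition it encodes. -/
def compOfWord : List (Option Bool) → List (ℕ × Bool)
  | [] => []
  | none :: t =>
      match compOfWord t with
      | [] => []
      | (a, b) :: r => (a + 1, b) :: r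
  | some b :: t => (1, b) :: compOfWord t

/-- The set `Σ^B(n+1)` of signed sets, encoded as words of length `n+1` over `{0,1,*}`
whose last letter is not `*`. -/
def SignedSetWord (n : ℕ) : Type :=
  { w : Fin (n + 1) → Option Bool // w (Fin.last n) ≠ none }

noncomputable instance (n : ℕ) : Fintype (SignedSetWord n) := by
  unfold SignedSetWord; infer_instance

instance (n : ℕ) : DecidableEq (SignedSetWord n) := by
  unfold SignedSetWord; infer_instance

/-- The weight matrix `A_{n+1}`, with rows indexed by signed compositions of `n+1`
(encoded as words) and columns by signed sets in `Σ^B(n+1)`, whose `(γ, σ)` entry is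
`wt_γ(σ)`. -/
def weightMatrix (n : ℕ) : Matrix (SignedSetWord n) (SignedSetWord n) ℤ :=
  Matrix.of fun γ σ => wt (compOfWord (List.ofFn γ.1)) (List.ofFn σ.1)

/-- The length of the initial run of `*`-s in a word. -/
def starRun {n : ℕ} (w : SignedSetWord n) : ℕ :=
  ((List.ofFn w.1).takeWhile fun o => o.isNone).length

/-- The matrix `Â_{n+1}`, obtained from `A_{n+1}` by setting to zero all entries
`(γ, σ)` for which the initial `*`-run of the row word is longer than that of the
column word. -/
def weightMatrixHat (n : ℕ) : Matrix (SignedSetWord n) (SignedSetWord n) ℤ :=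
  Matrix.of fun γ σ => if starRun σ < starRun γ then 0 else weightMatrix n γ σ

/-- `A_{n+1}` as a real matrix. -/
noncomputable def weightMatrixR (n : ℕ) : Matrix (SignedSetWord n) (SignedSetWord n) ℝ :=
  Matrix.of fun γ σ => ((weightMatrix n γ σ : ℤ) : ℝ)

/-- `Â_{n+1}` as a real matrix. -/
noncomputable def weightMatrixHatR (n : ℕ) :
    Matrix (SignedSetWord n) (SignedSetWord n) ℝ :=
  Matrix.of fun γ σ => ((weightMatrixHat n γ σ : ℤ) : ℝ)

/-- The list of (absolute) part sizes of the signed composition encoded by the word `γ`. -/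
def partSizes {n : ℕ} (γ : SignedSetWord n) : List ℕ :=
  (compOfWord (List.ofFn γ.1)).map Prod.fst

section WtAux

/-! ### List-level lemmas about `firstSign`, `somesArePrefix`, `wt`, `compOfWord`. -/

lemma firstSign_none_cons (l : List (Option Bool)) : firstSign (none :: l) = firstSign l := by
  simp [firstSign]

lemma firstSign_some_cons (b : Bool) (l : List (Option Bool)) :
    firstSign (some b :: l) = b := by
  simp [firstSign]

lemma somesArePrefix_nil : somesArePrefix [] = true := by decide

lemma somesArePrefix_some_cons (b : Bool) (l : List (Option Bool)) :
    somesArePrefix (some b :: l) = somesArePrefix l := by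
  simp [somesArePrefix, List.dropWhile]

lemma somesArePrefix_none_cons (l : List (Option Bool)) :
    somesArePrefix (none :: l) = l.all (fun o => o.isNone) := by
  simp [somesArePrefix, List.dropWhile]

lemma wt_one_cons (a : Bool) (t : List (ℕ × Bool)) (x : Option Bool) (l : List (Option Bool)) :
    wt ((1, a) :: t) (x :: l)
      = (-1 : ℤ) ^ (if a && firstSign (x :: l) then 1 else 0) * wt t l := by
  simp [wt, somesArePrefix_nil]

lemma wt_cons_eq (a : ℕ) (b : Bool) (r : List (ℕ × Bool)) (l : List (Option Bool)) :
    wt ((a, b) :: r) l =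
      if somesArePrefix (l.take (a - 1))
          && ((List.range (min a l.length)).all fun j => firstSign (l.drop j) == firstSign l) then
        (-1 : ℤ) ^ (((l.take (a - 1)).filterMap id).length + (if b && firstSign l then 1 else 0))
          * wt r (l.drop a)
      else 0 := by
  have h1 : min (a - 1) a = a - 1 := Nat.min_eq_left (Nat.sub_le a 1)
  simp [wt, List.take_take, h1, List.length_take]

lemma range_succ_all (m : ℕ) (p : ℕ → Bool) :
    (List.range (m + 1)).all p = (p 0 && (List.range m).all fun j => p (j + 1)) := by
  simp [List.range_succ_eq_map, Function.comp_def]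

lemma wt_star_some (c : ℕ) (b : Bool) (r : List (ℕ × Bool)) (a' : Bool)
    (l : List (Option Bool)) (hl : l ≠ []) :
    wt ((c + 2, b) :: r) (some a' :: l)
      = if firstSign l = a' then -wt ((c + 1, b) :: r) l else 0 := by
  rw [wt_cons_eq, wt_cons_eq]
  simp only [Nat.succ_sub_one, List.take_succ_cons, List.length_cons,
    Nat.succ_min_succ, range_succ_all, List.drop_zero, List.drop_succ_cons,
    somesArePrefix_some_cons, firstSign_some_cons, List.drop,
    List.filterMap_cons, id, List.length_cons, beq_self_eq_true, Bool.true_and]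
  by_cases h : firstSign l = a'
  · subst h
    rw [if_pos rfl]
    by_cases hc : (somesArePrefix (l.take c)
        && ((List.range (min (c + 1) l.length)).all fun j => firstSign (l.drop j) == firstSign l))
    · rw [if_pos hc, if_pos hc]
      rw [show ((l.take c).filterMap (fun x => x)).length + 1 + (if (b && firstSign l) = true then 1 else 0)
          = (((l.take c).filterMap (fun x => x)).length + (if (b && firstSign l) = true then 1 else 0)) + 1
          from by ring, pow_succ]
      ring
    · rw [if_neg hc, if_neg hc, neg_zero]
  · rw [if_neg h]
    have h1 : 0 < min (c + 1) l.length := by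
      have : 0 < l.length := List.length_pos_iff.mpr hl
      omega
    have hall : ((List.range (min (c + 1) l.length)).all
        fun j => firstSign (l.drop j) == a') = false := by
      rw [List.all_eq_false]
      exact ⟨0, by simpa [List.mem_range] using h1, by simpa using h⟩
    rw [hall]
    simp

lemma somesArePrefix_of_all_isNone {l : List (Option Bool)}
    (h : l.all (fun o => o.isNone)) : somesArePrefix l = true := by
  cases l with
  | nil => decide
  | cons x t =>
    simp only [List.all_cons, Bool.and_eq_true] at h
    cases x with
    | none => simpa [somesArePrefix_none_cons] using h.2
    | some b => simp at h

lemma wt_star_none (c : ℕ) (b : Bool) (r : List (ℕ × Bool)) (l : List (Option Bool)) :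
    wt ((c + 2, b) :: r) (none :: l)
      = if (l.take c).all (fun o => o.isNone) then wt ((c + 1, b) :: r) l else 0 := by
  rw [wt_cons_eq, wt_cons_eq]
  simp only [Nat.succ_sub_one, List.take_succ_cons, List.length_cons,
    Nat.succ_min_succ, range_succ_all, List.drop_zero, List.drop_succ_cons,
    somesArePrefix_none_cons, firstSign_none_cons, List.filterMap_cons, id,
    beq_self_eq_true, Bool.true_and]
  by_cases hA : (l.take c).all (fun o => o.isNone)
  · rw [if_pos hA, hA, somesArePrefix_of_all_isNone hA]
  · rw [if_neg hA]
    rw [show ((l.take c).all fun o => o.isNone) = false from by simpa using hA]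
    simp

lemma compOfWord_structure : ∀ (l : List (Option Bool)) (h : l ≠ []), l.getLast h ≠ none →
    ∃ b r, compOfWord l = ((l.takeWhile fun o => o.isNone).length + 1, b) :: r := by
  intro l
  induction l with
  | nil => intro h; exact absurd rfl h
  | cons x t ih =>
    intro h hlast
    cases x with
    | some b =>
      exact ⟨b, compOfWord t, by simp [compOfWord, List.takeWhile]⟩
    | none =>
      have ht : t ≠ [] := by
        rintro rfl
        exact hlast rfl
      have hlast' : t.getLast ht ≠ none := by
        rwa [List.getLast_cons ht] at hlast
      obtain ⟨b, r, hr⟩ := ih ht hlast'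
      refine ⟨b, r, ?_⟩
      simp only [compOfWord, hr, List.takeWhile]
      simp

lemma take_all_iff {α : Type*} (p : α → Bool) :
    ∀ (L : List α) (k : ℕ), ¬ L.all p = true →
      ((L.take k).all p = true ↔ k ≤ (L.takeWhile p).length)
  | _, 0, _ => by simp
  | [], _ + 1, h => by simp at h
  | x :: t, k + 1, h => by
    by_cases hx : p x = true
    · have ht : ¬ t.all p = true := by
        intro h'
        exact h (by simp [hx, h'])
      rw [List.take_succ_cons, List.all_cons, hx, Bool.true_and,
        List.takeWhile_cons_of_pos hx, List.length_cons,
        take_all_iff p t k ht]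
      omega
    · rw [List.take_succ_cons, List.all_cons, List.takeWhile_cons_of_neg hx]
      simp [hx]

/-! ### `SignedSetWord` infrastructure -/

variable {n : ℕ}

/-- Prepend a letter to a signed-set word. -/
def consW (x : Option Bool) (w : SignedSetWord n) : SignedSetWord (n + 1) :=
  ⟨Fin.cons x w.1, by
    have h : (Fin.cons x w.1 : Fin (n + 2) → Option Bool) (Fin.last (n + 1)) = w.1 (Fin.last n) := by
      rw [← Fin.succ_last]
      exact Fin.cons_succ (α := fun _ => Option Bool) x w.1 (Fin.last n)
    rw [h]; exact w.2⟩

/-- Drop the first letter of a signed-set word. -/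
def tlW (w : SignedSetWord (n + 1)) : SignedSetWord n :=
  ⟨fun i => w.1 i.succ, by
    show w.1 (Fin.last n).succ ≠ none
    rw [Fin.succ_last]; exact w.2⟩

@[simp] lemma consW_val_zero (x : Option Bool) (w : SignedSetWord n) :
    (consW x w).1 0 = x := rfl

@[simp] lemma tlW_consW (x : Option Bool) (w : SignedSetWord n) : tlW (consW x w) = w :=
  Subtype.ext (funext fun i => by simp [tlW, consW])

lemma consW_head_tlW (w' : SignedSetWord (n + 1)) : consW (w'.1 0) (tlW w') = w' :=
  Subtype.ext (Fin.cons_self_tail w'.1)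

lemma ofFn_consW (x : Option Bool) (w : SignedSetWord n) :
    List.ofFn (consW x w).1 = x :: List.ofFn w.1 := by
  rw [List.ofFn_succ]
  exact congrArg₂ List.cons rfl (congrArg List.ofFn (funext fun i => by simp [consW]))

/-- The decomposition of words of length `n + 2` according to their first letter. -/
def wordEquiv : SignedSetWord (n + 1) ≃ (SignedSetWord n ⊕ SignedSetWord n) ⊕ SignedSetWord n where
  toFun w' :=
    if w'.1 0 = none then .inr (tlW w')
    else if w'.1 0 = some true then .inl (.inr (tlW w')) else .inl (.inl (tlW w'))
  invFun := Sum.elim (Sum.elim (consW (some false)) (consW (some true))) (consW none)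
  left_inv w' := by
    have hc := consW_head_tlW w'
    rcases h : w'.1 0 with _ | b
    · rw [h] at hc; simpa [h] using hc
    · rw [h] at hc
      cases b
      · simpa [h] using hc
      · simpa [h] using hc
  right_inv s := by
    rcases s with (s | s) | s <;> simp

@[simp] lemma wordEquiv_symm_inl_inl (s : SignedSetWord n) :
    (wordEquiv (n := n)).symm (.inl (.inl s)) = consW (some false) s := rfl

@[simp] lemma wordEquiv_symm_inl_inr (s : SignedSetWord n) :
    (wordEquiv (n := n)).symm (.inl (.inr s)) = consW (some true) s := rfl

@[simp] lemma wordEquiv_symm_inr (s : SignedSetWord n) :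
    (wordEquiv (n := n)).symm (.inr s) = consW none s := rfl

lemma starRun_consW_some (a : Bool) (w : SignedSetWord n) :
    starRun (consW (some a) w) = 0 := by
  rw [starRun, ofFn_consW]
  simp

lemma starRun_consW_none (w : SignedSetWord n) :
    starRun (consW none w) = starRun w + 1 := by
  rw [starRun, ofFn_consW, starRun]
  simp [List.takeWhile_cons]

/-- The sign of the first element of a signed set. -/
def fsW (w : SignedSetWord n) : Bool := firstSign (List.ofFn w.1)

lemma ofFn_ne_nil (w : SignedSetWord n) : List.ofFn w.1 ≠ [] := by
  simp [List.ofFn_succ]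

lemma getLast_ofFn_ne_none (w : SignedSetWord n) :
    (List.ofFn w.1).getLast (ofFn_ne_nil w) ≠ none := by
  rw [List.getLast_ofFn]
  exact w.2

lemma not_all_isNone (w : SignedSetWord n) :
    ¬ (List.ofFn w.1).all (fun o => o.isNone) = true := by
  intro h
  have hm := List.getLast_mem (ofFn_ne_nil w)
  have := List.all_eq_true.mp h _ hm
  exact getLast_ofFn_ne_none w (Option.isNone_iff_eq_none.mp this)

lemma compOfWord_ofFn (w : SignedSetWord n) :
    ∃ b r, compOfWord (List.ofFn w.1) = (starRun w + 1, b) :: r :=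
  compOfWord_structure _ (ofFn_ne_nil w) (getLast_ofFn_ne_none w)

/-! ### Entry recursions for the weight matrices -/

lemma wm_some_cons (a : Bool) (x : Option Bool) (g w : SignedSetWord n) :
    weightMatrix (n + 1) (consW (some a) g) (consW x w)
      = (if a && firstSign (x :: List.ofFn w.1) then -1 else 1) * weightMatrix n g w := by
  simp only [weightMatrix, Matrix.of_apply, ofFn_consW]
  rw [show compOfWord (some a :: List.ofFn g.1) = (1, a) :: compOfWord (List.ofFn g.1) from rfl,
    wt_one_cons]
  congr 1
  cases h : (a && firstSign (x :: List.ofFn w.1)) <;> simp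

lemma wm_some_some (a a' : Bool) (g w : SignedSetWord n) :
    weightMatrix (n + 1) (consW (some a) g) (consW (some a') w)
      = (if a && a' then -1 else 1) * weightMatrix n g w := by
  rw [wm_some_cons, firstSign_some_cons]

lemma wm_some_none (a : Bool) (g w : SignedSetWord n) :
    weightMatrix (n + 1) (consW (some a) g) (consW none w)
      = (if a && fsW w then -1 else 1) * weightMatrix n g w := by
  rw [wm_some_cons, firstSign_none_cons]
  rfl

lemma compOfWord_none_cons (t : List (Option Bool)) (k : ℕ) (b : Bool) (r : List (ℕ × Bool))
    (h : compOfWord t = (k + 1, b) :: r) :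
    compOfWord (none :: t) = (k + 2, b) :: r := by
  simp [compOfWord, h]

lemma wm_none_some (a' : Bool) (g w : SignedSetWord n) :
    weightMatrix (n + 1) (consW none g) (consW (some a') w)
      = if fsW w = a' then -weightMatrix n g w else 0 := by
  obtain ⟨b, r, hr⟩ := compOfWord_ofFn g
  simp only [weightMatrix, Matrix.of_apply, ofFn_consW]
  rw [compOfWord_none_cons _ _ _ _ hr,
    wt_star_some (starRun g) b r a' _ (ofFn_ne_nil w), ← hr]
  rfl

lemma wm_none_none (g w : SignedSetWord n) :
    weightMatrix (n + 1) (consW none g) (consW none w) = weightMatrixHat n g w := by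
  obtain ⟨b, r, hr⟩ := compOfWord_ofFn g
  simp only [weightMatrix, weightMatrixHat, Matrix.of_apply, ofFn_consW]
  rw [compOfWord_none_cons _ _ _ _ hr, wt_star_none (starRun g) b r _, ← hr]
  have hiff := take_all_iff (fun o => o.isNone) (List.ofFn w.1) (starRun g) (not_all_isNone w)
  by_cases hk : starRun g ≤ starRun w
  · rw [if_pos (hiff.mpr hk), if_neg (by omega : ¬ starRun w < starRun g)]
  · rw [if_neg (fun hh => hk (hiff.mp hh)), if_pos (by omega)]

lemma wmh_some (a : Bool) (g : SignedSetWord n) (σ : SignedSetWord (n + 1)) :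
    weightMatrixHat (n + 1) (consW (some a) g) σ
      = weightMatrix (n + 1) (consW (some a) g) σ := by
  simp only [weightMatrixHat, Matrix.of_apply, starRun_consW_some]
  rw [if_neg (Nat.not_lt_zero _)]

lemma wmh_none_some (a' : Bool) (g w : SignedSetWord n) :
    weightMatrixHat (n + 1) (consW none g) (consW (some a') w) = 0 := by
  simp only [weightMatrixHat, Matrix.of_apply, starRun_consW_some, starRun_consW_none]
  rw [if_pos (Nat.succ_pos _)]

lemma wmh_none_none (g w : SignedSetWord n) :
    weightMatrixHat (n + 1) (consW none g) (consW none w) = weightMatrixHat n g w := by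
  simp only [weightMatrixHat, Matrix.of_apply, starRun_consW_none, Nat.add_lt_add_iff_right]
  rw [wm_none_none]
  simp only [weightMatrixHat, Matrix.of_apply]
  by_cases h : starRun w < starRun g
  · rw [if_pos h, if_pos h]
  · rw [if_neg h, if_neg h]

/-! ### Real versions -/

lemma wmR_some_some (a a' : Bool) (g w : SignedSetWord n) :
    weightMatrixR (n + 1) (consW (some a) g) (consW (some a') w)
      = (if a && a' then -1 else 1) * weightMatrixR n g w := by
  simp only [weightMatrixR, Matrix.of_apply, wm_some_some]
  push_cast
  cases (a && a') <;> simp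

lemma wmR_some_none (a : Bool) (g w : SignedSetWord n) :
    weightMatrixR (n + 1) (consW (some a) g) (consW none w)
      = (if a && fsW w then -1 else 1) * weightMatrixR n g w := by
  simp only [weightMatrixR, Matrix.of_apply, wm_some_none]
  push_cast
  cases (a && fsW w) <;> simp

lemma wmR_none_some (a' : Bool) (g w : SignedSetWord n) :
    weightMatrixR (n + 1) (consW none g) (consW (some a') w)
      = if fsW w = a' then -weightMatrixR n g w else 0 := by
  simp only [weightMatrixR, Matrix.of_apply, wm_none_some]
  by_cases h : fsW w = a' <;> simp [h]

lemma wmR_none_none (g w : SignedSetWord n) :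
    weightMatrixR (n + 1) (consW none g) (consW none w) = weightMatrixHatR n g w := by
  simp only [weightMatrixR, weightMatrixHatR, Matrix.of_apply, wm_none_none]

lemma wmhR_some (a : Bool) (g : SignedSetWord n) (σ : SignedSetWord (n + 1)) :
    weightMatrixHatR (n + 1) (consW (some a) g) σ
      = weightMatrixR (n + 1) (consW (some a) g) σ := by
  simp only [weightMatrixHatR, weightMatrixR, Matrix.of_apply, wmh_some]

lemma wmhR_none_some (a' : Bool) (g w : SignedSetWord n) :
    weightMatrixHatR (n + 1) (consW none g) (consW (some a') w) = 0 := by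
  simp only [weightMatrixHatR, Matrix.of_apply, wmh_none_some, Int.cast_zero]

lemma wmhR_none_none (g w : SignedSetWord n) :
    weightMatrixHatR (n + 1) (consW none g) (consW none w) = weightMatrixHatR n g w := by
  simp only [weightMatrixHatR, Matrix.of_apply, wmh_none_none]

/-! ### The block determinant computation -/

/-- Diagonal indicator matrix of the first sign. -/
noncomputable def DbW (n : ℕ) (b : Bool) : Matrix (SignedSetWord n) (SignedSetWord n) ℝ :=
  Matrix.diagonal (fun w => if fsW w = b then 1 else 0)

lemma DbW_add (n : ℕ) : DbW n false + DbW n true = 1 := by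
  ext i j
  by_cases hij : i = j
  · subst hij
    simp only [DbW, Matrix.add_apply, Matrix.diagonal_apply_eq, Matrix.one_apply_eq]
    cases h : fsW i <;> simp [h]
  · simp [DbW, Matrix.diagonal_apply_ne _ hij, Matrix.one_apply_ne hij]

lemma DbW_mul_self (n : ℕ) (b : Bool) : DbW n b * DbW n b = DbW n b := by
  rw [DbW, Matrix.diagonal_mul_diagonal]
  ext i j
  by_cases hij : i = j
  · subst hij
    by_cases h : fsW i = b <;> simp [h]
  · simp [Matrix.diagonal_apply_ne _ hij]

lemma main_step (α : ℝ) (n : ℕ) :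
    (α • weightMatrixR (n + 1) + (1 - α) • weightMatrixHatR (n + 1)).det
      = (weightMatrixR n).det * ((-2 : ℝ) • weightMatrixR n).det
          * (α • weightMatrixR n + weightMatrixHatR n).det := by
  classical
  set A := weightMatrixR n with hA
  set Ah := weightMatrixHatR n with hAh
  set C := A * DbW n false with hC
  set D := A * DbW n true with hD
  have hCD : C + D = A := by
    rw [hC, hD, ← Matrix.mul_add, DbW_add, Matrix.mul_one]
  set M := α • weightMatrixR (n + 1) + (1 - α) • weightMatrixHatR (n + 1) with hM
  set B11 : Matrix _ _ ℝ := Matrix.fromBlocks A A A (-A) with hB11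
  set B12 := Matrix.fromRows A (C - D) with hB12
  set B21 := Matrix.fromCols (-(α • C)) (-(α • D)) with hB21
  have hsub : M.submatrix (wordEquiv (n := n)).symm (wordEquiv (n := n)).symm
      = Matrix.fromBlocks B11 B12 B21 Ah := by
    ext i j
    rcases i with (s | s) | s <;> rcases j with (t | t) | t <;>
      simp only [hM, Matrix.submatrix_apply, wordEquiv_symm_inl_inl, wordEquiv_symm_inl_inr,
        wordEquiv_symm_inr, Matrix.add_apply, Matrix.smul_apply, smul_eq_mul, hB11, hB12, hB21,
        Matrix.fromBlocks_apply₁₁, Matrix.fromBlocks_apply₁₂, Matrix.fromBlocks_apply₂₁,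
        Matrix.fromBlocks_apply₂₂, Matrix.fromRows_apply_inl, Matrix.fromRows_apply_inr,
        Matrix.fromCols_apply_inl, Matrix.fromCols_apply_inr,
        wmR_some_some, wmR_some_none, wmR_none_some, wmR_none_none,
        wmhR_some, wmhR_none_some, wmhR_none_none, hC, hD, DbW,
        Matrix.sub_apply, Matrix.mul_diagonal, Matrix.neg_apply]
    all_goals (cases h : fsW t <;> simp [h, hA, hAh] <;> ring)
  -- the column-operation matrix
  set U1 : Matrix (SignedSetWord n ⊕ SignedSetWord n) (SignedSetWord n ⊕ SignedSetWord n) ℝ :=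
    Matrix.fromBlocks 1 (-1) 0 1 with hU1
  set U2 := Matrix.fromRows (-(DbW n false)) (-(DbW n true)) with hU2
  set U := Matrix.fromBlocks U1 U2 (0 : Matrix (SignedSetWord n) (SignedSetWord n ⊕ SignedSetWord n) ℝ) (1 : Matrix (SignedSetWord n) (SignedSetWord n) ℝ) with hU
  have g1 : B11 * U1 = Matrix.fromBlocks A 0 A ((-2 : ℝ) • A) := by
    rw [hB11, hU1, Matrix.fromBlocks_multiply, Matrix.fromBlocks_inj]
    refine ⟨?_, ?_, ?_, ?_⟩
    · simp
    · simp
    · simp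
    · ext i j
      simp only [Matrix.mul_neg, Matrix.mul_one, Matrix.neg_mul, Matrix.neg_apply,
        Matrix.add_apply, Matrix.smul_apply, smul_eq_mul]
      ring
  have g2 : B11 * U2 + B12 = 0 := by
    rw [hB11, hU2, hB12, Matrix.fromBlocks_mul_fromRows]
    have e1 : A * -(DbW n false) + A * -(DbW n true) + A = 0 := by
      rw [Matrix.mul_neg, Matrix.mul_neg, ← hC, ← hD, ← hCD]
      abel
    have e2 : A * -(DbW n false) + -A * -(DbW n true) + (C - D) = 0 := by
      rw [Matrix.mul_neg, Matrix.neg_mul, Matrix.mul_neg, neg_neg, ← hC, ← hD]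
      abel
    ext i j
    rcases i with i | i
    · exact congrFun (congrFun e1 i) j
    · exact congrFun (congrFun e2 i) j
  have g3 : B21 * U2 + Ah = α • A + Ah := by
    rw [hB21, hU2, Matrix.fromCols_mul_fromRows]
    congr 1
    have h1 : C * DbW n false = C := by
      rw [hC, Matrix.mul_assoc, DbW_mul_self]
    have h2 : D * DbW n true = D := by
      rw [hD, Matrix.mul_assoc, DbW_mul_self]
    rw [Matrix.neg_mul, Matrix.mul_neg, neg_neg, Matrix.neg_mul, Matrix.mul_neg, neg_neg,
      Matrix.smul_mul, Matrix.smul_mul, h1, h2, ← smul_add, hCD]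
  have hMU : Matrix.fromBlocks B11 B12 B21 Ah * U
      = Matrix.fromBlocks (Matrix.fromBlocks A 0 A ((-2 : ℝ) • A)) 0 (B21 * U1) (α • A + Ah) := by
    rw [hU, Matrix.fromBlocks_multiply]
    rw [Matrix.mul_zero, add_zero, Matrix.mul_one, Matrix.mul_zero, add_zero, Matrix.mul_one]
    rw [g1, g2, g3]
  have hUdet : U.det = 1 := by
    simp [hU, hU1, Matrix.det_fromBlocks_zero₂₁]
  have hMdet : M.det = (Matrix.fromBlocks B11 B12 B21 Ah).det := by
    rw [← hsub, Matrix.det_submatrix_equiv_self]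
  calc M.det = (Matrix.fromBlocks B11 B12 B21 Ah).det * U.det := by
        rw [hUdet, mul_one, hMdet]
    _ = (Matrix.fromBlocks B11 B12 B21 Ah * U).det := (Matrix.det_mul _ _).symm
    _ = A.det * ((-2 : ℝ) • A).det * (α • A + Ah).det := by
        rw [hMU, Matrix.det_fromBlocks_zero₁₂, Matrix.det_fromBlocks_zero₁₂]

/-! ### The base case -/

lemma base_word (γ : SignedSetWord 0) : ∃ b : Bool, γ.1 0 = some b := by
  cases h : γ.1 0 with
  | none => exact absurd h γ.2
  | some b => exact ⟨b, rfl⟩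

lemma base_case_det (α : ℝ) :
    (α • weightMatrixR 0 + (1 - α) • weightMatrixHatR 0).det = -2 := by
  classical
  have hzero : ∀ γ : SignedSetWord 0, starRun γ = 0 := by
    intro γ
    obtain ⟨b, hb⟩ := base_word γ
    rw [starRun, show (List.ofFn γ.1) = [some b] from by simp [List.ofFn_succ, hb]]
    simp
  have hhat : weightMatrixHatR 0 = weightMatrixR 0 := by
    ext γ σ
    simp [weightMatrixHatR, weightMatrixR, weightMatrixHat, hzero]
  rw [hhat, ← add_smul, show α + (1 - α) = 1 from by ring, one_smul]
  let f : Bool → SignedSetWord 0 := fun b => ⟨fun _ => some b, by simp⟩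
  have key : ∀ γ : SignedSetWord 0, γ = f ((γ.1 0).getD false) := by
    intro γ
    obtain ⟨b, hb⟩ := base_word γ
    refine Subtype.ext (funext fun i => ?_)
    rw [show i = 0 from Fin.fin_one_eq_zero i, hb]
    simp [f]
  let e0 : Bool ≃ SignedSetWord 0 :=
    { toFun := f
      invFun := fun γ => (γ.1 0).getD false
      left_inv := fun b => rfl
      right_inv := fun γ => (key γ).symm }
  rw [← Matrix.det_submatrix_equiv_self (finTwoEquiv.trans e0)]
  have hE : ∀ b b' : Bool, weightMatrixR 0 (f b) (f b') = if b && b' then -1 else 1 := by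
    intro b b'
    show ((wt (compOfWord (List.ofFn fun _ => some b)) (List.ofFn fun _ => some b') : ℤ) : ℝ) = _
    rw [show (List.ofFn fun _ : Fin 1 => some b) = [some b] from by simp,
      show (List.ofFn fun _ : Fin 1 => some b') = [some b'] from by simp]
    cases b <;> cases b' <;>
      norm_num [show wt (compOfWord [some false]) [some false] = 1 from by decide,
        show wt (compOfWord [some false]) [some true] = 1 from by decide,
        show wt (compOfWord [some true]) [some false] = 1 from by decide,
        show wt (compOfWord [some true]) [some true] = -1 from by decide]
  rw [Matrix.det_fin_two]
  have h00 : (finTwoEquiv.trans e0) 0 = f false := rfl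
  have h11 : (finTwoEquiv.trans e0) 1 = f true := rfl
  simp only [Matrix.submatrix_apply, h00, h11, hE]
  norm_num

end WtAux

/-- The determinant recursion for the weight matrices (here `A_{n+1} = weightMatrix n`):
for every real `α` and every `n ≥ 1`,
`det(αA_{n+1} + (1−α)Â_{n+1}) = det(A_n) · det(−2A_n) · det(αA_n + Â_n)`,
with `det(αA₁ + (1−α)Â₁) = −2`. -/
theorem weightMatrix_det_recursion (α : ℝ) :
    (∀ n : ℕ,
      (α • weightMatrixR (n + 1) + (1 - α) • weightMatrixHatR (n + 1)).det
        = (weightMatrixR n).det * ((-2 : ℝ) • weightMatrixR n).det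
            * (α • weightMatrixR n + weightMatrixHatR n).det) ∧
    (α • weightMatrixR 0 + (1 - α) • weightMatrixHatR 0).det = -2 := by
  exact ⟨fun n => main_step α n, base_case_det α⟩
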